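/- Let s, t > 0, let σ and τ be finite types, and let f be a formal power series in the variables σ over ℝ such that the family (d ↦ |coeff_d f| · t^{|d|}) is summable with sum M. Let g : σ → (formal power series in the variables τ over ℝ) be a family all of whose members have zero constant term, such that for each i ∈ σ the family (e ↦ |coeff_e (g i)| · s^{|e|}) is summable with sum at most t. Then the family (e ↦ |coeff_e (f(g))| · s^{|e|}) is summable with sum at most M, where f(g) denotes the substitution of the family g into f. -/

import Mathlib

open MvPowerSeries NNReal ENNReal

open Classical in
/-- The finite set of multi-indices on a finite type `σ` of total degree at most `k`. -/
noncomputable def degLE (σ : Type*) [Fintype σ] (k : ℕ) : Finset (σ →₀ ℕ) :=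
  (Finset.Iic (Finsupp.equivFunOnFinite.symm (fun _ : σ => k))).filter
    (fun d => (d.sum fun _ n => n) ≤ k)

/-- Truncation of a multivariate power series to total degree at most `k`,
as a multivariate polynomial. -/
noncomputable def truncTotalDeg {σ : Type*} [Fintype σ] (k : ℕ)
    (f : MvPowerSeries σ ℝ) : MvPolynomial σ ℝ :=
  ∑ d ∈ degLE σ k, MvPolynomial.monomial d (MvPowerSeries.coeff d f)

/-- Substitution of the family `g` (assumed to have zero constant terms) into
the power series `f`: the coefficient at the multi-index `e` only involves
the terms of `f` of total degree at most `|e|`. -/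
noncomputable def psSubst {σ τ : Type*} [Fintype σ]
    (f : MvPowerSeries σ ℝ) (g : σ → MvPowerSeries τ ℝ) : MvPowerSeries τ ℝ :=
  fun e => MvPowerSeries.coeff e
    (MvPolynomial.aeval g (truncTotalDeg (e.sum fun _ n => n) f))

/-- The weighted `ℓ¹`-type norm of a power series, valued in `ℝ≥0∞`. -/
noncomputable def wn {τ : Type*} (s : ℝ≥0) (h : MvPowerSeries τ ℝ) : ℝ≥0∞ :=
  ∑' e : τ →₀ ℕ, (‖MvPowerSeries.coeff e h‖₊ : ℝ≥0∞) * (s : ℝ≥0∞) ^ (e.sum fun _ n => n)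

lemma wn_mul {τ : Type*} (s : ℝ≥0) (h₁ h₂ : MvPowerSeries τ ℝ) :
    wn s (h₁ * h₂) ≤ wn s h₁ * wn s h₂ := by
  classical
  set a : (τ →₀ ℕ) → ℝ≥0∞ :=
    fun d => (‖MvPowerSeries.coeff d h₁‖₊ : ℝ≥0∞) * (s : ℝ≥0∞) ^ (d.sum fun _ n => n) with ha
  set b : (τ →₀ ℕ) → ℝ≥0∞ :=
    fun d => (‖MvPowerSeries.coeff d h₂‖₊ : ℝ≥0∞) * (s : ℝ≥0∞) ^ (d.sum fun _ n => n) with hb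
  have hstep : ∀ e : τ →₀ ℕ,
      (‖MvPowerSeries.coeff e (h₁ * h₂)‖₊ : ℝ≥0∞) * (s : ℝ≥0∞) ^ (e.sum fun _ n => n)
        ≤ ∑ p ∈ Finset.HasAntidiagonal.antidiagonal e, a p.1 * b p.2 := by
    intro e
    rw [MvPowerSeries.coeff_mul]
    calc (‖∑ p ∈ Finset.HasAntidiagonal.antidiagonal e,
            MvPowerSeries.coeff p.1 h₁ * MvPowerSeries.coeff p.2 h₂‖₊ : ℝ≥0∞)
            * (s : ℝ≥0∞) ^ (e.sum fun _ n => n)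
        ≤ (∑ p ∈ Finset.HasAntidiagonal.antidiagonal e,
            (‖MvPowerSeries.coeff p.1 h₁‖₊ : ℝ≥0∞) * (‖MvPowerSeries.coeff p.2 h₂‖₊ : ℝ≥0∞))
            * (s : ℝ≥0∞) ^ (e.sum fun _ n => n) := by
          refine mul_le_mul_left ?_ _
          calc (‖∑ p ∈ Finset.HasAntidiagonal.antidiagonal e,
                MvPowerSeries.coeff p.1 h₁ * MvPowerSeries.coeff p.2 h₂‖₊ : ℝ≥0∞)
              ≤ ((∑ p ∈ Finset.HasAntidiagonal.antidiagonal e,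
                ‖MvPowerSeries.coeff p.1 h₁ * MvPowerSeries.coeff p.2 h₂‖₊ : ℝ≥0) : ℝ≥0∞) := by
                exact_mod_cast ENNReal.coe_le_coe.mpr (nnnorm_sum_le _ _)
            _ = _ := by push_cast [nnnorm_mul]; rfl
      _ = ∑ p ∈ Finset.HasAntidiagonal.antidiagonal e, a p.1 * b p.2 := by
          rw [Finset.sum_mul]
          refine Finset.sum_congr rfl fun p hp => ?_
          have hpe : p.1 + p.2 = e := Finset.HasAntidiagonal.mem_antidiagonal.mp hp
          have hsum : (e.sum fun _ n => n) = (p.1.sum fun _ n => n) + (p.2.sum fun _ n => n) := by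
            rw [← hpe]; exact Finsupp.sum_add_index' (fun _ => rfl) (fun _ _ _ => rfl)
          rw [hsum, pow_add, ha, hb]
          ring
  have h1 : ∀ e : τ →₀ ℕ, (∑ p ∈ Finset.HasAntidiagonal.antidiagonal e, a p.1 * b p.2)
      = ∑' p : (Finset.HasAntidiagonal.antidiagonal e : Finset ((τ →₀ ℕ) × (τ →₀ ℕ))), a (p : (τ →₀ ℕ) × (τ →₀ ℕ)).1 * b (p : (τ →₀ ℕ) × (τ →₀ ℕ)).2 := by
    intro e
    rw [tsum_fintype]
    exact (Finset.sum_finset_coe _ _).symm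
  calc wn s (h₁ * h₂) ≤ ∑' e : τ →₀ ℕ, ∑ p ∈ Finset.HasAntidiagonal.antidiagonal e, a p.1 * b p.2 :=
        ENNReal.tsum_le_tsum hstep
    _ = ∑' e : τ →₀ ℕ, ∑' p : (Finset.HasAntidiagonal.antidiagonal e : Finset ((τ →₀ ℕ) × (τ →₀ ℕ))), a (p : (τ →₀ ℕ) × (τ →₀ ℕ)).1 * b (p : (τ →₀ ℕ) × (τ →₀ ℕ)).2 :=
        tsum_congr h1
    _ = ∑' x : Σ e : τ →₀ ℕ, (Finset.HasAntidiagonal.antidiagonal e : Finset ((τ →₀ ℕ) × (τ →₀ ℕ))), a (x.2 : (τ →₀ ℕ) × (τ →₀ ℕ)).1 * b (x.2 : (τ →₀ ℕ) × (τ →₀ ℕ)).2 :=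
        (ENNReal.tsum_sigma'
          (fun x : Σ e : τ →₀ ℕ, (Finset.HasAntidiagonal.antidiagonal e : Finset ((τ →₀ ℕ) × (τ →₀ ℕ))) =>
            a (x.2 : (τ →₀ ℕ) × (τ →₀ ℕ)).1 * b (x.2 : (τ →₀ ℕ) × (τ →₀ ℕ)).2)).symm
    _ = ∑' p : (τ →₀ ℕ) × (τ →₀ ℕ), a p.1 * b p.2 :=
        Finset.HasAntidiagonal.sigmaAntidiagonalEquivProd.tsum_eq (fun p : (τ →₀ ℕ) × (τ →₀ ℕ) => a p.1 * b p.2)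
    _ = ∑' d₁ : τ →₀ ℕ, ∑' d₂ : τ →₀ ℕ, a d₁ * b d₂ :=
        ENNReal.tsum_prod (f := fun x y => a x * b y)
    _ = wn s h₁ * wn s h₂ := by
        simp only [ENNReal.tsum_mul_left, ENNReal.tsum_mul_right]
        rfl

lemma wn_one {τ : Type*} (s : ℝ≥0) : wn s (1 : MvPowerSeries τ ℝ) ≤ 1 := by
  classical
  refine le_of_eq ?_
  rw [wn, tsum_eq_single (0 : τ →₀ ℕ)]
  · simp [MvPowerSeries.coeff_one]
  · intro e he; simp [MvPowerSeries.coeff_one, he]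

lemma wn_pow {τ : Type*} (s : ℝ≥0) (h : MvPowerSeries τ ℝ) (n : ℕ) :
    wn s (h ^ n) ≤ (wn s h) ^ n := by
  induction n with
  | zero => simpa using wn_one s
  | succ n ih =>
      rw [pow_succ, pow_succ]
      exact (wn_mul s _ _).trans (mul_le_mul_left ih _)

lemma wn_prod {τ ι : Type*} (s : ℝ≥0) (u : Finset ι) (h : ι → MvPowerSeries τ ℝ) (n : ι → ℕ) :
    wn s (∏ i ∈ u, h i ^ n i) ≤ ∏ i ∈ u, (wn s (h i)) ^ n i := by
  classical
  induction u using Finset.induction with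
  | empty => simpa using wn_one s
  | @insert a u hi ih =>
      rw [Finset.prod_insert hi, Finset.prod_insert hi]
      exact (wn_mul s _ _).trans (mul_le_mul' (wn_pow s _ _) ih)

lemma mem_degLE {σ : Type*} [Fintype σ] {k : ℕ} {d : σ →₀ ℕ} :
    d ∈ degLE σ k ↔ (d.sum fun _ n => n) ≤ k := by
  simp only [degLE, Finset.mem_filter, Finset.mem_Iic]
  refine ⟨fun h => h.2, fun h => ⟨?_, h⟩⟩
  intro i
  have h1 : d i ≤ d.sum fun _ n => n := by
    by_cases hd : d i = 0
    · simp [hd]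
    · exact Finset.single_le_sum (fun _ _ => Nat.zero_le _) (Finsupp.mem_support_iff.mpr hd)
  simpa using h1.trans h

lemma coeff_psSubst {σ τ : Type*} [Fintype σ] (f : MvPowerSeries σ ℝ)
    (g : σ → MvPowerSeries τ ℝ) (e : τ →₀ ℕ) :
    MvPowerSeries.coeff e (psSubst f g) =
      ∑ d ∈ degLE σ (e.sum fun _ n => n),
        MvPowerSeries.coeff d f *
          MvPowerSeries.coeff e (d.prod fun i k => g i ^ k) := by
  have h0 : MvPowerSeries.coeff e (psSubst f g) =
      MvPowerSeries.coeff e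
        (MvPolynomial.aeval g (truncTotalDeg (e.sum fun _ n => n) f)) := rfl
  rw [h0, truncTotalDeg, map_sum, map_sum]
  refine Finset.sum_congr rfl fun d _ => ?_
  rw [MvPolynomial.aeval_monomial, ← Algebra.smul_def, map_smul, smul_eq_mul]

lemma ennterm_eq {x : ℝ} {sN : ℝ≥0} {n : ℕ} :
    (‖x‖₊ : ℝ≥0∞) * (sN : ℝ≥0∞) ^ n = ENNReal.ofReal (|x| * (sN : ℝ) ^ n) := by
  rw [ENNReal.ofReal_mul (abs_nonneg x), ← Real.enorm_eq_ofReal_abs, enorm_eq_nnnorm,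
    ENNReal.ofReal_pow sN.coe_nonneg, ENNReal.ofReal_coe_nnreal]

/-- Composition of convergent power series is convergent: if `‖f‖_t = M` and each
`g i` has zero constant term with `‖g i‖_s ≤ t`, then `‖f(g)‖_s ≤ M`. -/
theorem subst_norm_le (s t : ℝ) (hs : 0 < s) (ht : 0 < t)
    {σ τ : Type*} [Fintype σ] [Fintype τ]
    (f : MvPowerSeries σ ℝ) (M : ℝ)
    (hf : HasSum (fun d : σ →₀ ℕ =>
      |MvPowerSeries.coeff d f| * t ^ (d.sum fun _ n => n)) M)
    (g : σ → MvPowerSeries τ ℝ)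
    (hg0 : ∀ i, MvPowerSeries.constantCoeff (σ := τ) (R := ℝ) (g i) = 0)
    (hg : ∀ i, Summable (fun e : τ →₀ ℕ =>
        |MvPowerSeries.coeff e (g i)| * s ^ (e.sum fun _ n => n)) ∧
      (∑' e : τ →₀ ℕ,
        |MvPowerSeries.coeff e (g i)| * s ^ (e.sum fun _ n => n)) ≤ t) :
    Summable (fun e : τ →₀ ℕ =>
      |MvPowerSeries.coeff e (psSubst f g)| * s ^ (e.sum fun _ n => n)) ∧
    (∑' e : τ →₀ ℕ,
      |MvPowerSeries.coeff e (psSubst f g)| * s ^ (e.sum fun _ n => n)) ≤ M := by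
  classical
  set sN : ℝ≥0 := ⟨s, hs.le⟩ with hsN
  set tN : ℝ≥0 := ⟨t, ht.le⟩ with htN
  have hsc : (sN : ℝ) = s := rfl
  have htc : (tN : ℝ) = t := rfl
  have hgwn : ∀ i, wn sN (g i) ≤ (tN : ℝ≥0∞) := by
    intro i
    have heq : wn sN (g i) = ENNReal.ofReal
        (∑' e : τ →₀ ℕ, |MvPowerSeries.coeff e (g i)| * s ^ (e.sum fun _ n => n)) := by
      rw [ENNReal.ofReal_tsum_of_nonneg (fun e => by positivity) (hg i).1]
      exact tsum_congr fun e => ennterm_eq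
    rw [heq]
    calc ENNReal.ofReal (∑' e : τ →₀ ℕ,
            |MvPowerSeries.coeff e (g i)| * s ^ (e.sum fun _ n => n))
        ≤ ENNReal.ofReal t := ENNReal.ofReal_le_ofReal (hg i).2
      _ = (tN : ℝ≥0∞) := by rw [← htc, ENNReal.ofReal_coe_nnreal]
  have hM0 : 0 ≤ M := hf.nonneg fun d => by positivity
  have hMf : (∑' d : σ →₀ ℕ,
      (‖MvPowerSeries.coeff d f‖₊ : ℝ≥0∞) * (tN : ℝ≥0∞) ^ (d.sum fun _ n => n))
      = ENNReal.ofReal M := by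
    rw [← hf.tsum_eq, ENNReal.ofReal_tsum_of_nonneg (fun d => by positivity) hf.summable]
    exact tsum_congr fun d => ennterm_eq
  set A : (σ →₀ ℕ) → (τ →₀ ℕ) → ℝ≥0∞ := fun d e =>
    (‖MvPowerSeries.coeff d f‖₊ : ℝ≥0∞) *
      ((‖MvPowerSeries.coeff e (d.prod fun i k => g i ^ k)‖₊ : ℝ≥0∞) *
        (sN : ℝ≥0∞) ^ (e.sum fun _ n => n)) with hA
  have key : wn sN (psSubst f g) ≤ ENNReal.ofReal M := by
    calc wn sN (psSubst f g) ≤ ∑' e : τ →₀ ℕ, ∑' d : σ →₀ ℕ, A d e := by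
          refine ENNReal.tsum_le_tsum fun e => ?_
          calc (‖MvPowerSeries.coeff e (psSubst f g)‖₊ : ℝ≥0∞)
                * (sN : ℝ≥0∞) ^ (e.sum fun _ n => n)
              ≤ ∑ d ∈ degLE σ (e.sum fun _ n => n), A d e := by
                rw [coeff_psSubst]
                calc (‖∑ d ∈ degLE σ (e.sum fun _ n => n),
                        MvPowerSeries.coeff d f *
                          MvPowerSeries.coeff e (d.prod fun i k => g i ^ k)‖₊ : ℝ≥0∞)
                        * (sN : ℝ≥0∞) ^ (e.sum fun _ n => n)
                    ≤ (∑ d ∈ degLE σ (e.sum fun _ n => n),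
                        (‖MvPowerSeries.coeff d f‖₊ : ℝ≥0∞) *
                          (‖MvPowerSeries.coeff e (d.prod fun i k => g i ^ k)‖₊ : ℝ≥0∞))
                        * (sN : ℝ≥0∞) ^ (e.sum fun _ n => n) := by
                      refine mul_le_mul_left ?_ _
                      calc (‖∑ d ∈ degLE σ (e.sum fun _ n => n),
                            MvPowerSeries.coeff d f *
                              MvPowerSeries.coeff e (d.prod fun i k => g i ^ k)‖₊ : ℝ≥0∞)
                          ≤ ((∑ d ∈ degLE σ (e.sum fun _ n => n),
                            ‖MvPowerSeries.coeff d f *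
                              MvPowerSeries.coeff e (d.prod fun i k => g i ^ k)‖₊ : ℝ≥0) : ℝ≥0∞) :=
                            ENNReal.coe_le_coe.mpr (nnnorm_sum_le _ _)
                        _ = _ := by push_cast [nnnorm_mul]; rfl
                  _ = ∑ d ∈ degLE σ (e.sum fun _ n => n), A d e := by
                      rw [Finset.sum_mul]
                      exact Finset.sum_congr rfl fun d _ => by rw [hA, mul_assoc]
            _ ≤ ∑' d : σ →₀ ℕ, A d e := ENNReal.sum_le_tsum _
      _ = ∑' d : σ →₀ ℕ, ∑' e : τ →₀ ℕ, A d e := ENNReal.tsum_comm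
      _ ≤ ∑' d : σ →₀ ℕ,
            (‖MvPowerSeries.coeff d f‖₊ : ℝ≥0∞) * (tN : ℝ≥0∞) ^ (d.sum fun _ n => n) := by
          refine ENNReal.tsum_le_tsum fun d => ?_
          rw [hA, ENNReal.tsum_mul_left]
          refine mul_le_mul_right ?_ _
          calc (∑' e : τ →₀ ℕ,
                (‖MvPowerSeries.coeff e (d.prod fun i k => g i ^ k)‖₊ : ℝ≥0∞) *
                  (sN : ℝ≥0∞) ^ (e.sum fun _ n => n))
              = wn sN (d.prod fun i k => g i ^ k) := rfl
            _ ≤ ∏ i ∈ d.support, (wn sN (g i)) ^ d i := wn_prod sN d.support g d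
            _ ≤ ∏ i ∈ d.support, (tN : ℝ≥0∞) ^ d i :=
                Finset.prod_le_prod' fun i _ => pow_le_pow_left' (hgwn i) _
            _ = (tN : ℝ≥0∞) ^ (d.sum fun _ n => n) := by
                rw [Finset.prod_pow_eq_pow_sum]; rfl
      _ = ENNReal.ofReal M := hMf
  set u : (τ →₀ ℕ) → ℝ := fun e =>
    |MvPowerSeries.coeff e (psSubst f g)| * s ^ (e.sum fun _ n => n) with hu
  have hterm : ∀ e, ENNReal.ofReal (u e) =
      (‖MvPowerSeries.coeff e (psSubst f g)‖₊ : ℝ≥0∞) *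
        (sN : ℝ≥0∞) ^ (e.sum fun _ n => n) := fun e => by simp only [hu, ← hsc]; exact ennterm_eq.symm
  have hfin : (∑' e : τ →₀ ℕ, ENNReal.ofReal (u e)) ≤ ENNReal.ofReal M := by
    rw [tsum_congr hterm]; exact key
  have hne : (∑' e : τ →₀ ℕ, ENNReal.ofReal (u e)) ≠ ⊤ :=
    ne_top_of_le_ne_top ENNReal.ofReal_ne_top hfin
  have hsumm : Summable u := by
    have h1 := ENNReal.summable_toReal hne
    refine h1.congr fun e => ?_
    rw [ENNReal.toReal_ofReal (by rw [hu]; positivity)]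
  refine ⟨hsumm, ?_⟩
  have heq2 : (∑' e : τ →₀ ℕ, u e) = (∑' e : τ →₀ ℕ, ENNReal.ofReal (u e)).toReal :=
    calc (∑' e : τ →₀ ℕ, u e) = ∑' e : τ →₀ ℕ, (ENNReal.ofReal (u e)).toReal :=
          tsum_congr fun e => (ENNReal.toReal_ofReal (by rw [hu]; positivity)).symm
      _ = (∑' e : τ →₀ ℕ, ENNReal.ofReal (u e)).toReal :=
          (ENNReal.tsum_toReal_eq fun e => ENNReal.ofReal_ne_top).symm
  rw [heq2]
  calc (∑' e : τ →₀ ℕ, ENNReal.ofReal (u e)).toReal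
      ≤ (ENNReal.ofReal M).toReal := ENNReal.toReal_mono ENNReal.ofReal_ne_top hfin
    _ = M := ENNReal.toReal_ofReal hM0
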